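/- For all integers p ≥ 8 and k ≥ p−3, we have g^k_{p−3}(p) = k+3; that is, every Gallai-k-coloring of K_{k+3} contains a set of p vertices spanning edges in at most p−3 colors, and there exists a Gallai-k-coloring of K_{k+2} in which every set of p vertices spans edges in at least p−2 colors. -/

import Mathlib

open Finset

/-- A Gallai coloring: a symmetric edge-coloring of the complete graph on `V`
with no rainbow triangle. -/
def IsGallai {V β : Type*} (c : V → V → β) : Prop :=
  (∀ a b, c a b = c b a) ∧
  ∀ a b d : V, a ≠ b → a ≠ d → b ≠ d →
    ¬(c a b ≠ c a d ∧ c a b ≠ c b d ∧ c a d ≠ c b d)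

/-- The set of colors appearing on edges inside the vertex set `S`. -/
def colorsOn {V β : Type*} [DecidableEq V] [DecidableEq β]
    (c : V → V → β) (S : Finset V) : Finset β :=
  ((S ×ˢ S).filter fun p => p.1 ≠ p.2).image fun p => c p.1 p.2

/-- `gallaiNum k q p` is the smallest positive `n` such that every Gallai-`k`-coloring
of `K_n` contains a set of `p` vertices whose induced edges use at most `q` colors. -/
noncomputable def gallaiNum (k q p : ℕ) : ℕ :=
  sInf {n : ℕ | 0 < n ∧ ∀ c : Fin n → Fin n → Fin k, IsGallai c →
    ∃ S : Finset (Fin n), S.card = p ∧ (colorsOn c S).card ≤ q}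

namespace GallaiAux

set_option linter.unusedSectionVars false
set_option linter.unusedVariables false

open scoped Classical

variable {V β : Type*} [DecidableEq V] [DecidableEq β]

/-- adjacency: an edge inside S avoiding colors x,y -/
def adjR (c : V → V → β) (S : Finset V) (x y : β) (u w : V) : Prop :=
  u ∈ S ∧ w ∈ S ∧ u ≠ w ∧ c u w ≠ x ∧ c u w ≠ y

def reachR (c : V → V → β) (S : Finset V) (x y : β) : V → V → Prop :=
  Relation.ReflTransGen (adjR c S x y)

variable {c : V → V → β}

lemma adjR_symm (hc : IsGallai c) {S : Finset V} {x y : β} :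
    Symmetric (adjR c S x y) := by
  rintro u w ⟨h1, h2, h3, h4, h5⟩
  refine ⟨h2, h1, h3.symm, ?_, ?_⟩ <;> rw [hc.1 w u] <;> assumption

lemma reachR_symm (hc : IsGallai c) {S : Finset V} {x y : β} {u w : V}
    (h : reachR c S x y u w) : reachR c S x y w u :=
  by
  haveI : Std.Symm (adjR c S x y) := ⟨fun a b h => adjR_symm hc h⟩
  exact Relation.ReflTransGen.stdSymm.symm _ _ h

lemma reachR_trans {S : Finset V} {x y : β} {u w z : V}
    (h : reachR c S x y u w) (h' : reachR c S x y w z) : reachR c S x y u z :=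
  Relation.ReflTransGen.trans h h'

lemma reachR_mem_right {S : Finset V} {x y : β} {u w : V} (hu : u ∈ S)
    (h : reachR c S x y u w) : w ∈ S := by
  induction h with
  | refl => exact hu
  | tail _ hadj ih => exact hadj.2.1

/-- two distinct non-adjacent vertices of S are joined by color x or y -/
lemma not_adj_color {S : Finset V} {x y : β} {u w : V} (hu : u ∈ S) (hw : w ∈ S)
    (hne : u ≠ w) (h : ¬ adjR c S x y u w) : c u w = x ∨ c u w = y := by
  by_contra hcon
  push_neg at hcon
  exact h ⟨hu, hw, hne, hcon.1, hcon.2⟩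

lemma not_reach_not_adj {S : Finset V} {x y : β} {u w : V}
    (h : ¬ reachR c S x y u w) : ¬ adjR c S x y u w := fun ha =>
  h (Relation.ReflTransGen.single ha)

/-- Pair-monochromaticity along reachability: if u ~ u' and w is not reachable
from u, then c u w = c u' w. -/
lemma pm (hc : IsGallai c) {S : Finset V} {x y : β} {u u' w : V}
    (hu : u ∈ S) (hw : w ∈ S) (hr : reachR c S x y u u')
    (hnw : ¬ reachR c S x y u w) : c u w = c u' w := by
  induction hr with
  | refl => rfl
  | @tail b b' hub hadj ih =>
    -- ih : c u w = c b w, step b -- b' adjacent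
    rw [ih]
    have hbS : b ∈ S := hadj.1
    have hb'S : b' ∈ S := hadj.2.1
    have hnb : ¬ reachR c S x y b w := by
      intro h
      exact hnw (reachR_trans hub h)
    have hnb' : ¬ reachR c S x y b' w := by
      intro h
      exact hnw (reachR_trans (reachR_trans hub (Relation.ReflTransGen.single hadj)) h)
    have hbw : b ≠ w := by rintro rfl; exact hnb Relation.ReflTransGen.refl
    have hb'w : b' ≠ w := by rintro rfl; exact hnb' Relation.ReflTransGen.refl
    have h1 : c b w = x ∨ c b w = y := not_adj_color hbS hw hbw (not_reach_not_adj hnb)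
    have h2 : c b' w = x ∨ c b' w = y := not_adj_color hb'S hw hb'w (not_reach_not_adj hnb')
    have htri := hc.2 b b' w hadj.2.2.1 hbw hb'w
    by_contra hne
    apply htri
    refine ⟨?_, ?_, hne⟩
    · intro h
      rcases h1 with h' | h'
      · exact hadj.2.2.2.1 (h.trans h')
      · exact hadj.2.2.2.2 (h.trans h')
    · intro h
      rcases h2 with h' | h'
      · exact hadj.2.2.2.1 (h.trans h')
      · exact hadj.2.2.2.2 (h.trans h')

/-- The key disconnection lemma: every Gallai coloring on S (|S| ≥ 2) admits
two colors x, y and a nontrivial split A | S\A with all cross edges colored x or y. -/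
lemma L2 (hc : IsGallai c) :
    ∀ n (S : Finset V), S.card = n → 2 ≤ n →
    ∃ x y : β, ∃ A : Finset V, A ⊆ S ∧ A.Nonempty ∧ (S \ A).Nonempty ∧
      ∀ a ∈ A, ∀ b' ∈ S \ A, c a b' = x ∨ c a b' = y := by
  intro n
  induction n using Nat.strong_induction_on with
  | _ n IH =>
  intro S hcard h2
  by_cases hn2 : n = 2
  · subst hn2
    obtain ⟨a, b, hab, rfl⟩ := Finset.card_eq_two.mp hcard
    refine ⟨c a b, c a b, {a}, by simp, ⟨a, Finset.mem_singleton_self a⟩, ?_, ?_⟩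
    · refine ⟨b, Finset.mem_sdiff.mpr ⟨by simp, by simpa using hab.symm⟩⟩
    · intro a' ha' b' hb'
      rw [Finset.mem_singleton] at ha'
      subst ha'
      rw [Finset.mem_sdiff, Finset.mem_singleton] at hb'
      have hb'b : b' = b := by
        have := hb'.1
        simp only [Finset.mem_insert, Finset.mem_singleton] at this
        rcases this with h | h
        · exact absurd h hb'.2
        · exact h
      subst hb'b
      left; rfl
  -- n ≥ 3
  have h3 : 3 ≤ n := by omega
  obtain ⟨v, hv⟩ : S.Nonempty := Finset.card_pos.mp (by omega)
  set S' := S.erase v with hS'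
  have hcard' : S'.card = n - 1 := by rw [hS', Finset.card_erase_of_mem hv, hcard]
  obtain ⟨x, y, A', hA'sub, hA'ne, hA'ne2, hcross⟩ :=
    IH (n-1) (by omega) S' hcard' (by omega)
  have hS'S : S' ⊆ S := Finset.erase_subset v S
  have hvS' : v ∉ S' := Finset.notMem_erase v S
  -- side preservation
  have hside : ∀ u w : V, reachR c S' x y u w → u ∈ A' → w ∈ A' := by
    intro u w hr
    induction hr with
    | refl => exact id
    | @tail b b' hub hadj ih =>
      intro hu
      have hb : b ∈ A' := ih hu
      by_contra hb'
      have hb'S : b' ∈ S' \ A' := Finset.mem_sdiff.mpr ⟨hadj.2.1, hb'⟩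
      rcases hcross b hb b' hb'S with h | h
      · exact hadj.2.2.2.1 h
      · exact hadj.2.2.2.2 h
  have hside' : ∀ u w : V, reachR c S' x y u w → u ∈ S' \ A' → w ∈ S' \ A' := by
    intro u w hr hu
    have hwS' : w ∈ S' := reachR_mem_right (Finset.mem_sdiff.mp hu).1 hr
    rw [Finset.mem_sdiff] at hu ⊢
    refine ⟨hwS', fun hwA => ?_⟩
    exact hu.2 (hside w u (reachR_symm hc hr) hwA)
  obtain ⟨a₀, ha₀⟩ := hA'ne
  obtain ⟨b₀, hb₀⟩ := hA'ne2
  have hnab : ¬ reachR c S' x y a₀ b₀ := by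
    intro h
    exact (Finset.mem_sdiff.mp (hside' b₀ a₀ (reachR_symm hc h) hb₀)).2 ha₀
  -- P = non-xy neighbors of v
  set P := S'.filter (fun u => c v u ≠ x ∧ c v u ≠ y) with hP
  have hPmem : ∀ u, u ∈ P ↔ u ∈ S' ∧ c v u ≠ x ∧ c v u ≠ y := by
    intro u; rw [hP, Finset.mem_filter]
  have hvP : ∀ u ∈ S', u ∉ P → c v u = x ∨ c v u = y := by
    intro u hu hup
    by_contra hcon
    push_neg at hcon
    exact hup ((hPmem u).mpr ⟨hu, hcon⟩)
  have hvne : ∀ u ∈ S', v ≠ u := by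
    rintro u hu rfl; exact hvS' hu
  by_cases hPempty : P = ∅
  · -- Case 1 : A = {v}
    refine ⟨x, y, {v}, by simpa using hv, ⟨v, Finset.mem_singleton_self v⟩, ?_, ?_⟩
    · obtain ⟨u, hu⟩ : S'.Nonempty := Finset.card_pos.mp (by omega)
      exact ⟨u, Finset.mem_sdiff.mpr ⟨hS'S hu, by
        simp only [Finset.mem_singleton]; exact (hvne u hu).symm⟩⟩
    · intro a ha b' hb'
      rw [Finset.mem_singleton] at ha; subst ha
      rw [Finset.mem_sdiff, Finset.mem_singleton] at hb'
      have hb'S' : b' ∈ S' := Finset.mem_erase.mpr ⟨hb'.2, hb'.1⟩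
      apply hvP b' hb'S'
      rw [hPempty]; exact Finset.notMem_empty b'
  · -- P nonempty
    have hPne : P.Nonempty := Finset.nonempty_iff_ne_empty.mpr hPempty
    have hPS' : P ⊆ S' := Finset.filter_subset _ _
    by_cases hPconn : ∀ u ∈ P, ∀ u' ∈ P, reachR c S' x y u u'
    · -- Case 2: P inside one component, around u₀
      obtain ⟨u₀, hu₀⟩ := hPne
      set C := S'.filter (fun w => reachR c S' x y u₀ w) with hC
      have hCS' : C ⊆ S' := Finset.filter_subset _ _
      refine ⟨x, y, insert v C, ?_, ⟨v, Finset.mem_insert_self v C⟩, ?_, ?_⟩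
      · intro z hz
        rcases Finset.mem_insert.mp hz with rfl | hz
        · exact hv
        · exact hS'S (hCS' hz)
      · -- S \ A nonempty : a₀ or b₀ avoids C
        have : a₀ ∉ C ∨ b₀ ∉ C := by
          by_contra hcon
          push_neg at hcon
          have h1 : reachR c S' x y u₀ a₀ := (Finset.mem_filter.mp hcon.1).2
          have h2 : reachR c S' x y u₀ b₀ := (Finset.mem_filter.mp hcon.2).2
          exact hnab (reachR_trans (reachR_symm hc h1) h2)
        rcases this with h | h
        · refine ⟨a₀, Finset.mem_sdiff.mpr ⟨hS'S (hA'sub ha₀), ?_⟩⟩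
          rw [Finset.mem_insert]
          push_neg
          exact ⟨(hvne a₀ (hA'sub ha₀)).symm, h⟩
        · have hb₀S' : b₀ ∈ S' := (Finset.mem_sdiff.mp hb₀).1
          refine ⟨b₀, Finset.mem_sdiff.mpr ⟨hS'S hb₀S', ?_⟩⟩
          rw [Finset.mem_insert]
          push_neg
          exact ⟨(hvne b₀ hb₀S').symm, h⟩
      · intro a ha b' hb'
        rw [Finset.mem_sdiff, Finset.mem_insert] at hb'
        push_neg at hb'
        obtain ⟨hb'S, hb'v, hb'C⟩ := hb'
        have hb'S' : b' ∈ S' := Finset.mem_erase.mpr ⟨hb'v, hb'S⟩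
        rcases Finset.mem_insert.mp ha with rfl | haC
        · -- a = v : b' ∉ P since P ⊆ C
          apply hvP b' hb'S'
          intro hb'P
          exact hb'C (Finset.mem_filter.mpr ⟨hb'S', hPconn u₀ hu₀ b' hb'P⟩)
        · -- a ∈ C
          have haS' : a ∈ S' := hCS' haC
          have hru₀a : reachR c S' x y u₀ a := (Finset.mem_filter.mp haC).2
          have hne : a ≠ b' := by
            rintro rfl
            exact hb'C haC
          apply not_adj_color haS' hb'S' hne
          intro hadj
          exact hb'C (Finset.mem_filter.mpr ⟨hb'S',
            reachR_trans hru₀a (Relation.ReflTransGen.single hadj)⟩)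
    · -- Case 3 : P meets two components
      push_neg at hPconn
      obtain ⟨u₀, hu₀, u₁, hu₁, hnr01⟩ := hPconn
      have hu₀S' : u₀ ∈ S' := hPS' hu₀
      have hu₁S' : u₁ ∈ S' := hPS' hu₁
      -- uniform color p on P
      have hunif : ∀ u ∈ P, ∀ u' ∈ P, c v u = c v u' := by
        have key : ∀ u ∈ P, ∀ u' ∈ P, ¬ reachR c S' x y u u' → c v u = c v u' := by
          intro u hu u' hu' hnr
          have huS' : u ∈ S' := hPS' hu
          have hu'S' : u' ∈ S' := hPS' hu'
          have hne : u ≠ u' := by rintro rfl; exact hnr Relation.ReflTransGen.refl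
          have hcol : c u u' = x ∨ c u u' = y :=
            not_adj_color huS' hu'S' hne (not_reach_not_adj hnr)
          have hPu := (hPmem u).mp hu
          have hPu' := (hPmem u').mp hu'
          have htri := hc.2 v u u' (hvne u huS') (hvne u' hu'S') hne
          by_contra hneq
          apply htri
          refine ⟨hneq, ?_, ?_⟩
          · intro h
            rcases hcol with h' | h'
            · exact hPu.2.1 (h.trans h')
            · exact hPu.2.2 (h.trans h')
          · intro h
            rcases hcol with h' | h'
            · exact hPu'.2.1 (h.trans h')
            · exact hPu'.2.2 (h.trans h')
        intro u hu u' hu'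
        by_cases hr : reachR c S' x y u u'
        · -- both reach each other; compare to u₀ or u₁
          by_cases hr0 : reachR c S' x y u u₀
          · -- then ¬ reach u u₁ and ¬ reach u' u₁
            have hnr1 : ¬ reachR c S' x y u u₁ := by
              intro h
              exact hnr01 (reachR_trans (reachR_symm hc hr0) h)
            have hnr1' : ¬ reachR c S' x y u' u₁ := by
              intro h
              exact hnr1 (reachR_trans hr h)
            rw [key u hu u₁ hu₁ hnr1, key u' hu' u₁ hu₁ hnr1']
          · have hnr0' : ¬ reachR c S' x y u' u₀ := by
              intro h
              exact hr0 (reachR_trans hr h)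
            rw [key u hu u₀ hu₀ hr0, key u' hu' u₀ hu₀ hnr0']
        · exact key u hu u' hu' hr
      set pc := c v u₀ with hpc
      have hPcol : ∀ u ∈ P, c v u = pc := fun u hu => hunif u hu u₀ hu₀
      have hpcx : pc ≠ x := ((hPmem u₀).mp hu₀).2.1
      have hpcy : pc ≠ y := ((hPmem u₀).mp hu₀).2.2
      by_cases hxy : x = y
      · -- pair (x, pc), A = {v}
        refine ⟨x, pc, {v}, by simpa using hv, ⟨v, Finset.mem_singleton_self v⟩, ?_, ?_⟩
        · obtain ⟨u, hu⟩ : S'.Nonempty := Finset.card_pos.mp (by omega)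
          exact ⟨u, Finset.mem_sdiff.mpr ⟨hS'S hu, by
            simp only [Finset.mem_singleton]; exact (hvne u hu).symm⟩⟩
        · intro a ha b' hb'
          rw [Finset.mem_singleton] at ha; subst ha
          rw [Finset.mem_sdiff, Finset.mem_singleton] at hb'
          have hb'S' : b' ∈ S' := Finset.mem_erase.mpr ⟨hb'.2, hb'.1⟩
          by_cases hb'P : b' ∈ P
          · right; exact hPcol b' hb'P
          · rcases hvP b' hb'S' hb'P with h | h
            · left; exact h
            · left; rw [h, hxy]
      · -- x ≠ y
        by_cases hC₀ : ∃ w₀ ∈ S', ∀ u ∈ P, ¬ reachR c S' x y w₀ u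
        · -- some component avoids P : B = comp(w₀)
          obtain ⟨w₀, hw₀S', hw₀P⟩ := hC₀
          set C := S'.filter (fun w => reachR c S' x y w₀ w) with hC
          have hCS' : C ⊆ S' := Finset.filter_subset _ _
          have hw₀C : w₀ ∈ C := Finset.mem_filter.mpr ⟨hw₀S', Relation.ReflTransGen.refl⟩
          refine ⟨x, y, S \ C, ?_, ⟨v, ?_⟩, ?_, ?_⟩
          · exact Finset.sdiff_subset
          · refine Finset.mem_sdiff.mpr ⟨hv, fun hvC => hvS' (hCS' hvC)⟩
          · refine ⟨w₀, Finset.mem_sdiff.mpr ⟨hS'S hw₀S', fun h => ?_⟩⟩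
            exact (Finset.mem_sdiff.mp h).2 hw₀C
          · intro a ha b' hb'
            rw [Finset.mem_sdiff] at ha
            have hb'C : b' ∈ C := by
              rw [Finset.mem_sdiff, Finset.mem_sdiff] at hb'
              push_neg at hb'
              exact hb'.2 hb'.1
            have hb'S' : b' ∈ S' := hCS' hb'C
            have hrw₀b' : reachR c S' x y w₀ b' := (Finset.mem_filter.mp hb'C).2
            by_cases hav : a = v
            · subst hav
              apply hvP b' hb'S'
              intro hb'P
              exact hw₀P b' hb'P hrw₀b'
            · have haS' : a ∈ S' := Finset.mem_erase.mpr ⟨hav, ha.1⟩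
              have hne : a ≠ b' := by
                rintro rfl
                exact ha.2 hb'C
              apply not_adj_color haS' hb'S' hne
              intro hadj
              exact ha.2 (Finset.mem_filter.mpr ⟨haS',
                reachR_trans hrw₀b' (Relation.ReflTransGen.single (adjR_symm hc hadj))⟩)
        · -- every component meets P
          push_neg at hC₀
          set X := S'.filter (fun u => c v u = x) with hX
          set Y := S'.filter (fun u => c v u = y) with hY
          by_cases hXe : X = ∅
          · -- A = {v} with colors (y, pc)
            refine ⟨y, pc, {v}, by simpa using hv, ⟨v, Finset.mem_singleton_self v⟩, ?_, ?_⟩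
            · obtain ⟨u, hu⟩ : S'.Nonempty := Finset.card_pos.mp (by omega)
              exact ⟨u, Finset.mem_sdiff.mpr ⟨hS'S hu, by
                simp only [Finset.mem_singleton]; exact (hvne u hu).symm⟩⟩
            · intro a ha b' hb'
              rw [Finset.mem_singleton] at ha; subst ha
              rw [Finset.mem_sdiff, Finset.mem_singleton] at hb'
              have hb'S' : b' ∈ S' := Finset.mem_erase.mpr ⟨hb'.2, hb'.1⟩
              by_cases hb'P : b' ∈ P
              · right; exact hPcol b' hb'P
              · rcases hvP b' hb'S' hb'P with h | h
                · exfalso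
                  have : b' ∈ X := Finset.mem_filter.mpr ⟨hb'S', h⟩
                  rw [hXe] at this
                  exact Finset.notMem_empty b' this
                · left; exact h
          · by_cases hYe : Y = ∅
            · refine ⟨x, pc, {v}, by simpa using hv, ⟨v, Finset.mem_singleton_self v⟩, ?_, ?_⟩
              · obtain ⟨u, hu⟩ : S'.Nonempty := Finset.card_pos.mp (by omega)
                exact ⟨u, Finset.mem_sdiff.mpr ⟨hS'S hu, by
                  simp only [Finset.mem_singleton]; exact (hvne u hu).symm⟩⟩
              · intro a ha b' hb'
                rw [Finset.mem_singleton] at ha; subst ha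
                rw [Finset.mem_sdiff, Finset.mem_singleton] at hb'
                have hb'S' : b' ∈ S' := Finset.mem_erase.mpr ⟨hb'.2, hb'.1⟩
                by_cases hb'P : b' ∈ P
                · right; exact hPcol b' hb'P
                · rcases hvP b' hb'S' hb'P with h | h
                  · left; exact h
                  · exfalso
                    have : b' ∈ Y := Finset.mem_filter.mpr ⟨hb'S', h⟩
                    rw [hYe] at this
                    exact Finset.notMem_empty b' this
            · -- final contradiction
              exfalso
              obtain ⟨u, hu⟩ := Finset.nonempty_iff_ne_empty.mpr hXe
              obtain ⟨w, hw⟩ := Finset.nonempty_iff_ne_empty.mpr hYe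
              have huS' : u ∈ S' := (Finset.mem_filter.mp hu).1
              have hwS' : w ∈ S' := (Finset.mem_filter.mp hw).1
              have hux : c v u = x := (Finset.mem_filter.mp hu).2
              have hwy : c v w = y := (Finset.mem_filter.mp hw).2
              -- claim A : for u' with c v u' = x, a ∈ P not reachable from u' : c u' a = x
              have claimA : ∀ u' ∈ S', c v u' = x → ∀ a ∈ P, ¬ reachR c S' x y u' a →
                  c u' a = x := by
                intro u' hu'S' hu'x a haP hnr
                have haS' : a ∈ S' := hPS' haP
                have hne : u' ≠ a := by rintro rfl; exact hnr Relation.ReflTransGen.refl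
                have hcol : c u' a = x ∨ c u' a = y :=
                  not_adj_color hu'S' haS' hne (not_reach_not_adj hnr)
                rcases hcol with h | h
                · exact h
                · exfalso
                  have hapc : c v a = pc := hPcol a haP
                  have htri := hc.2 v u' a (hvne u' hu'S') (hvne a haS') hne
                  apply htri
                  refine ⟨?_, ?_, ?_⟩
                  · rw [hu'x, hapc]; exact fun hh => hpcx hh.symm
                  · rw [hu'x, h]; exact hxy
                  · rw [hapc, h]; exact hpcy
              have claimB : ∀ w' ∈ S', c v w' = y → ∀ a ∈ P, ¬ reachR c S' x y w' a →
                  c w' a = y := by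
                intro w' hw'S' hw'y a haP hnr
                have haS' : a ∈ S' := hPS' haP
                have hne : w' ≠ a := by rintro rfl; exact hnr Relation.ReflTransGen.refl
                have hcol : c w' a = x ∨ c w' a = y :=
                  not_adj_color hw'S' haS' hne (not_reach_not_adj hnr)
                rcases hcol with h | h
                · exfalso
                  have hapc : c v a = pc := hPcol a haP
                  have htri := hc.2 v w' a (hvne w' hw'S') (hvne a haS') hne
                  apply htri
                  refine ⟨?_, ?_, ?_⟩
                  · rw [hw'y, hapc]; exact fun hh => hpcy hh.symm
                  · rw [hw'y, h]; exact fun hh => hxy hh.symm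
                  · rw [hapc, h]; exact hpcx
                · exact h
              by_cases hruw : reachR c S' x y u w
              · -- same component; find z not reachable from u
                have hz : ∃ z ∈ S', ¬ reachR c S' x y u z := by
                  by_cases h0 : reachR c S' x y u a₀
                  · refine ⟨b₀, (Finset.mem_sdiff.mp hb₀).1, fun h => ?_⟩
                    exact hnab (reachR_trans (reachR_symm hc h0) h)
                  · exact ⟨a₀, hA'sub ha₀, h0⟩
                obtain ⟨z, hzS', hnz⟩ := hz
                obtain ⟨a, haP, hrza⟩ := hC₀ z hzS'
                have hnua : ¬ reachR c S' x y u a := by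
                  intro h
                  exact hnz (reachR_trans h (reachR_symm hc hrza))
                have hnwa : ¬ reachR c S' x y w a := by
                  intro h
                  exact hnua (reachR_trans hruw h)
                have h1 : c u a = x := claimA u huS' hux a haP hnua
                have h2 : c w a = y := claimB w hwS' hwy a haP hnwa
                have h3 : c u a = c w a := pm hc huS' (hPS' haP) hruw hnua
                rw [h1, h2] at h3
                exact hxy h3
              · -- different components
                obtain ⟨a, haP, hrau⟩ := hC₀ u huS'
                obtain ⟨a', ha'P, hraw⟩ := hC₀ w hwS'
                have hnwa : ¬ reachR c S' x y w a := by
                  intro h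
                  exact hruw (reachR_trans hrau (reachR_symm hc h))
                have hnua' : ¬ reachR c S' x y u a' := by
                  intro h
                  exact hruw (reachR_trans h (reachR_symm hc hraw))
                have h2 : c w a = y := claimB w hwS' hwy a haP hnwa
                have h1 : c u a' = x := claimA u huS' hux a' ha'P hnua'
                -- pm : reach u a , ¬reach u w : c u w = c a w
                have hnuw : ¬ reachR c S' x y u w := hruw
                have e1 : c u w = c a w := pm hc huS' hwS' hrau hnuw
                -- pm : reach w a', ¬ reach w u : c w u = c a' u
                have hnwu : ¬ reachR c S' x y w u := by
                  intro h
                  exact hruw (reachR_symm hc h)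
                have e2 : c w u = c a' u := pm hc hwS' huS' hraw hnwu
                have e3 : c a w = c w a := hc.1 a w
                have e4 : c a' u = c u a' := hc.1 a' u
                have e5 : c u w = c w u := hc.1 u w
                rw [e1, e3, h2] at e5
                rw [e2, e4, h1] at e5
                exact hxy e5.symm

/-- Gallai partition: S splits into ≥ 2 parts, pairwise joined monochromatically
using only two colors x, y overall. -/
lemma GP (hc : IsGallai c) (S : Finset V) (h2 : 2 ≤ S.card) :
    ∃ x y : β, ∃ Pp : Finset (Finset V),
      (∀ P ∈ Pp, P ⊆ S) ∧ (∀ P ∈ Pp, P.Nonempty) ∧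
      (∀ P ∈ Pp, ∀ Q ∈ Pp, P ≠ Q → Disjoint P Q) ∧
      Pp.biUnion id = S ∧ 2 ≤ Pp.card ∧
      (∀ P ∈ Pp, ∀ Q ∈ Pp, P ≠ Q →
        (∀ a ∈ P, ∀ b' ∈ Q, c a b' = x) ∨ (∀ a ∈ P, ∀ b' ∈ Q, c a b' = y)) := by
  obtain ⟨x, y, A, hAsub, hAne, hSAne, hcross⟩ := L2 hc S.card S rfl h2
  refine ⟨x, y, S.image (fun u => S.filter (fun w => reachR c S x y u w)), ?_, ?_, ?_, ?_, ?_, ?_⟩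
  case _ => -- subsets
    intro P hP
    obtain ⟨u, hu, rfl⟩ := Finset.mem_image.mp hP
    exact Finset.filter_subset _ _
  case _ => -- nonempty
    intro P hP
    obtain ⟨u, hu, rfl⟩ := Finset.mem_image.mp hP
    exact ⟨u, Finset.mem_filter.mpr ⟨hu, Relation.ReflTransGen.refl⟩⟩
  case _ => -- pairwise disjoint
    intro P hP Q hQ hPQ
    obtain ⟨u, hu, rfl⟩ := Finset.mem_image.mp hP
    obtain ⟨w, hw, rfl⟩ := Finset.mem_image.mp hQ
    rw [Finset.disjoint_left]
    intro z hzP hzQ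
    apply hPQ
    have h1 : reachR c S x y u z := (Finset.mem_filter.mp hzP).2
    have h2 : reachR c S x y w z := (Finset.mem_filter.mp hzQ).2
    have hr : reachR c S x y u w := reachR_trans h1 (reachR_symm hc h2)
    ext t
    simp only [Finset.mem_filter]
    constructor
    · rintro ⟨ht, hrt⟩
      exact ⟨ht, reachR_trans (reachR_symm hc hr) hrt⟩
    · rintro ⟨ht, hrt⟩
      exact ⟨ht, reachR_trans hr hrt⟩
  case _ => -- union
    ext z
    simp only [Finset.mem_biUnion, id]
    constructor
    · rintro ⟨P, hP, hzP⟩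
      obtain ⟨u, hu, rfl⟩ := Finset.mem_image.mp hP
      exact (Finset.mem_filter.mp hzP).1
    · intro hz
      exact ⟨S.filter (fun w => reachR c S x y z w), Finset.mem_image_of_mem _ hz,
        Finset.mem_filter.mpr ⟨hz, Relation.ReflTransGen.refl⟩⟩
  case _ => -- at least two parts
    obtain ⟨a₀, ha₀⟩ := hAne
    obtain ⟨b₀, hb₀⟩ := hSAne
    have ha₀S : a₀ ∈ S := hAsub ha₀
    have hb₀S : b₀ ∈ S := (Finset.mem_sdiff.mp hb₀).1
    have hb₀A : b₀ ∉ A := (Finset.mem_sdiff.mp hb₀).2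
    have hside : ∀ u w : V, reachR c S x y u w → u ∈ A → w ∈ A := by
      intro u w hr
      induction hr with
      | refl => exact id
      | @tail b b' hub hadj ih =>
        intro hu
        have hb : b ∈ A := ih hu
        by_contra hb'
        rcases hcross b hb b' (Finset.mem_sdiff.mpr ⟨hadj.2.1, hb'⟩) with h | h
        · exact hadj.2.2.2.1 h
        · exact hadj.2.2.2.2 h
    have hne : S.filter (fun w => reachR c S x y a₀ w) ≠
        S.filter (fun w => reachR c S x y b₀ w) := by
      intro h
      have : b₀ ∈ S.filter (fun w => reachR c S x y a₀ w) := by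
        rw [h]; exact Finset.mem_filter.mpr ⟨hb₀S, Relation.ReflTransGen.refl⟩
      exact hb₀A (hside a₀ b₀ (Finset.mem_filter.mp this).2 ha₀)
    exact Finset.one_lt_card.mpr
      ⟨_, Finset.mem_image_of_mem _ ha₀S, _, Finset.mem_image_of_mem _ hb₀S, hne⟩
  case _ => -- pair-mono with colors x, y
    intro P hP Q hQ hPQ
    obtain ⟨u₀, hu₀, rfl⟩ := Finset.mem_image.mp hP
    obtain ⟨w₀, hw₀, rfl⟩ := Finset.mem_image.mp hQ
    have hnr : ¬ reachR c S x y u₀ w₀ := by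
      intro hr
      apply hPQ
      ext t
      simp only [Finset.mem_filter]
      constructor
      · rintro ⟨ht, hrt⟩
        exact ⟨ht, reachR_trans (reachR_symm hc hr) hrt⟩
      · rintro ⟨ht, hrt⟩
        exact ⟨ht, reachR_trans hr hrt⟩
    have hne0 : u₀ ≠ w₀ := by rintro rfl; exact hnr Relation.ReflTransGen.refl
    have key : ∀ a ∈ S.filter (fun w => reachR c S x y u₀ w),
        ∀ b' ∈ S.filter (fun w => reachR c S x y w₀ w), c a b' = c u₀ w₀ := by
      intro a ha b' hb'
      have haS : a ∈ S := (Finset.mem_filter.mp ha).1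
      have hb'S : b' ∈ S := (Finset.mem_filter.mp hb').1
      have hra : reachR c S x y u₀ a := (Finset.mem_filter.mp ha).2
      have hrb : reachR c S x y w₀ b' := (Finset.mem_filter.mp hb').2
      have hnab : ¬ reachR c S x y a b' := by
        intro h
        exact hnr (reachR_trans hra (reachR_trans h (reachR_symm hc hrb)))
      -- c a b' = c u₀ b' (pm backwards along reach a u₀ ... use pm with u=a, u'=u₀)
      have e1 : c a b' = c u₀ b' := pm hc haS hb'S (reachR_symm hc hra) hnab
      have hnu₀b' : ¬ reachR c S x y b' u₀ := by
        intro h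
        exact hnr (reachR_symm hc (reachR_trans hrb h))
      have e2 : c b' u₀ = c w₀ u₀ := pm hc hb'S hu₀ (reachR_symm hc hrb) hnu₀b'
      rw [e1, hc.1 u₀ b', e2, hc.1 w₀ u₀]
    have hcol : c u₀ w₀ = x ∨ c u₀ w₀ = y := by
      apply not_adj_color hu₀ hw₀ hne0 (not_reach_not_adj hnr)
    rcases hcol with h | h
    · left; intro a ha b' hb'; rw [key a ha b' hb', h]
    · right; intro a ha b' hb'; rw [key a ha b' hb', h]

/-! ### The weight function and counting -/

/-- A color class is a "star" on `S`: some vertex `v` covers all its edges. -/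
def starOn (c : V → V → β) (S : Finset V) (b : β) : Prop :=
  ∃ v ∈ S, ∀ a ∈ S, ∀ a' ∈ S, a ≠ a' → c a a' = b → a = v ∨ a' = v

noncomputable def wcol (c : V → V → β) (S : Finset V) (b : β) : ℕ :=
  if starOn c S b then 1 else 2

noncomputable def Wt (c : V → V → β) (S : Finset V) : ℕ :=
  ∑ b ∈ colorsOn c S, wcol c S b

def phiF (s : ℕ) : ℕ := 3 * s / 2 - 2

lemma mem_colorsOn {c : V → V → β} {S : Finset V} {b : β} :
    b ∈ colorsOn c S ↔ ∃ a ∈ S, ∃ a' ∈ S, a ≠ a' ∧ c a a' = b := by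
  unfold colorsOn
  constructor
  · intro h
    simp only [Finset.mem_image, Finset.mem_filter, Finset.mem_product] at h
    obtain ⟨⟨a, a'⟩, ⟨⟨ha, ha'⟩, hne⟩, hb⟩ := h
    exact ⟨a, ha, a', ha', hne, hb⟩
  · rintro ⟨a, ha, a', ha', hne, hb⟩
    simp only [Finset.mem_image, Finset.mem_filter, Finset.mem_product]
    exact ⟨⟨a, a'⟩, ⟨⟨ha, ha'⟩, hne⟩, hb⟩

lemma colorsOn_mono {c : V → V → β} {S T : Finset V} (h : S ⊆ T) :
    colorsOn c S ⊆ colorsOn c T := by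
  intro b hb
  rw [mem_colorsOn] at hb ⊢
  obtain ⟨a, ha, a', ha', hne, hb⟩ := hb
  exact ⟨a, h ha, a', h ha', hne, hb⟩

lemma colorsOn_singleton (c : V → V → β) (v : V) : colorsOn c {v} = ∅ := by
  ext b
  simp only [mem_colorsOn, Finset.mem_singleton, Finset.notMem_empty, iff_false]
  rintro ⟨a, rfl, a', rfl, hne, -⟩
  exact hne rfl

lemma wcol_pos (c : V → V → β) (S : Finset V) (b : β) : 1 ≤ wcol c S b := by
  unfold wcol; split <;> omega

lemma wcol_le_two (c : V → V → β) (S : Finset V) (b : β) : wcol c S b ≤ 2 := by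
  unfold wcol; split <;> omega

lemma Wt_singleton (c : V → V → β) (v : V) : Wt c {v} = 0 := by
  unfold Wt
  rw [colorsOn_singleton]
  simp

lemma star_erase {c : V → V → β} {S : Finset V} {b : β} {v : V}
    (hstar : ∀ a ∈ S, ∀ a' ∈ S, a ≠ a' → c a a' = b → a = v ∨ a' = v) :
    b ∉ colorsOn c (S.erase v) := by
  rw [mem_colorsOn]
  rintro ⟨a, ha, a', ha', hne, hb⟩
  have h1 := Finset.mem_of_mem_erase ha
  have h2 := Finset.mem_of_mem_erase ha'
  rcases hstar a h1 a' h2 hne hb with rfl | rfl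
  · exact (Finset.ne_of_mem_erase ha) rfl
  · exact (Finset.ne_of_mem_erase ha') rfl

/-- arithmetic: peeling lemma -/
lemma phiF_add (a s : ℕ) (ha : 1 ≤ a) (hs : 1 ≤ s) : phiF a + phiF s ≤ phiF (a + s) := by
  unfold phiF; omega

lemma peelM (M : Multiset ℕ) (h : 0 < M.card) : ∃ a M', M = a ::ₘ M' := by
  obtain ⟨a, ha⟩ := Multiset.card_pos_iff_exists_mem.mp h
  obtain ⟨t, ht⟩ := Multiset.exists_cons_of_mem ha
  exact ⟨a, t, ht⟩

lemma arith_ge4 : ∀ t (M : Multiset ℕ), M.card = t → (∀ s ∈ M, 1 ≤ s) → 4 ≤ t →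
    (M.map phiF).sum + 4 ≤ phiF M.sum := by
  intro t
  induction t with
  | zero => intro M hc h1 h4; omega
  | succ m IH =>
    intro M hc h1 h4
    by_cases hm : m = 3
    · -- exactly 4 elements
      subst hm
      obtain ⟨a, M1, rfl⟩ := peelM M (by omega)
      obtain ⟨b, M2, rfl⟩ := peelM M1
        (by have h := hc; simp only [Multiset.card_cons] at h; omega)
      obtain ⟨d, M3, rfl⟩ := peelM M2
        (by have h := hc; simp only [Multiset.card_cons] at h; omega)
      obtain ⟨e, M4, rfl⟩ := peelM M3
        (by have h := hc; simp only [Multiset.card_cons] at h; omega)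
      have hM4 : M4 = 0 := by
        have h := hc
        simp only [Multiset.card_cons] at h
        have : M4.card = 0 := by omega
        exact Multiset.card_eq_zero.mp this
      subst hM4
      have ha : 1 ≤ a := h1 a (by simp)
      have hb : 1 ≤ b := h1 b (by simp)
      have hd : 1 ≤ d := h1 d (by simp)
      have he : 1 ≤ e := h1 e (by simp)
      simp only [Multiset.map_cons, Multiset.map_zero, Multiset.sum_cons,
        Multiset.sum_zero, add_zero]
      unfold phiF
      omega
    · -- ≥ 5 elements : peel one
      obtain ⟨a, M1, rfl⟩ := peelM M (by omega)
      have hM1c : M1.card = m := by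
        have h := hc; simp only [Multiset.card_cons] at h; omega
      have hsum : (M1.map phiF).sum + 4 ≤ phiF M1.sum :=
        IH M1 hM1c (fun s hs => h1 s (by simp [hs])) (by omega)
      have ha : 1 ≤ a := h1 a (by simp)
      have hM1s : 1 ≤ M1.sum := by
        have : ∃ z, z ∈ M1 := Multiset.card_pos_iff_exists_mem.mp (by omega)
        obtain ⟨z, hz⟩ := this
        have := h1 z (by simp [hz])
        have := Multiset.single_le_sum (fun y hy => Nat.zero_le y) z hz
        omega
      simp only [Multiset.map_cons, Multiset.sum_cons]
      calc phiF a + (M1.map phiF).sum + 4 ≤ phiF a + phiF M1.sum := by omega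
        _ ≤ phiF (a + M1.sum) := phiF_add a M1.sum ha hM1s

lemma arith_3 (a b d : ℕ) (ha : 2 ≤ a) (hb : 2 ≤ b) (hd : 2 ≤ d) :
    phiF a + phiF b + phiF d + 4 ≤ phiF (a + b + d) := by
  unfold phiF; omega

variable {c : V → V → β}

lemma colorsOn_pair (hc : IsGallai c) {a b : V} (hab : a ≠ b) :
    colorsOn c {a, b} = {c a b} := by
  ext z
  simp only [mem_colorsOn, Finset.mem_insert, Finset.mem_singleton]
  constructor
  · rintro ⟨a', ha', a'', ha'', hne, rfl⟩
    rcases ha' with rfl | rfl <;> rcases ha'' with rfl | rfl <;>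
      first | exact absurd rfl hne | rfl | exact hc.1 _ _
  · rintro rfl
    exact ⟨a, Or.inl rfl, b, Or.inr rfl, hab, rfl⟩

lemma Wt_pair (hc : IsGallai c) {a b : V} (hab : a ≠ b) : Wt c {a, b} ≤ 1 := by
  unfold Wt
  rw [colorsOn_pair hc hab, Finset.sum_singleton]
  have hstar : starOn c {a, b} (c a b) := by
    refine ⟨a, Finset.mem_insert_self a _, ?_⟩
    intro a' ha' a'' ha'' hne _
    simp only [Finset.mem_insert, Finset.mem_singleton] at ha' ha''
    rcases ha' with rfl | rfl
    · exact Or.inl rfl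
    · rcases ha'' with rfl | rfl
      · exact Or.inr rfl
      · exact absurd rfl hne
  unfold wcol
  rw [if_pos hstar]

lemma Wt_le_twice_card (c : V → V → β) (S : Finset V) :
    Wt c S ≤ 2 * (colorsOn c S).card := by
  unfold Wt
  calc ∑ b ∈ colorsOn c S, wcol c S b ≤ ∑ _b ∈ colorsOn c S, 2 :=
        Finset.sum_le_sum (fun b _ => wcol_le_two c S b)
    _ = 2 * (colorsOn c S).card := by rw [Finset.sum_const]; ring

lemma Wt_eq_card_of_all_star (c : V → V → β) (S : Finset V)
    (h : ∀ b ∈ colorsOn c S, starOn c S b) : Wt c S = (colorsOn c S).card := by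
  unfold Wt
  rw [Finset.sum_congr rfl (fun b hb => by unfold wcol; rw [if_pos (h b hb)])]
  simp

lemma Wt_three (hc : IsGallai c) {a b d : V} (hab : a ≠ b) (had : a ≠ d) (hbd : b ≠ d) :
    Wt c {a, b, d} ≤ 2 := by
  have hmemcases : ∀ a' ∈ ({a, b, d} : Finset V), ∀ a'' ∈ ({a, b, d} : Finset V),
      a' ≠ a'' → c a' a'' = c a b ∧ ((a' = a ∨ a'' = a) ∧ (a' = b ∨ a'' = b)) ∨
        c a' a'' = c a d ∧ ((a' = a ∨ a'' = a) ∧ (a' = d ∨ a'' = d)) ∨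
        c a' a'' = c b d ∧ ((a' = b ∨ a'' = b) ∧ (a' = d ∨ a'' = d)) := by
    intro a' ha' a'' ha'' hne
    simp only [Finset.mem_insert, Finset.mem_singleton] at ha' ha''
    rcases ha' with rfl | rfl | rfl <;> rcases ha'' with rfl | rfl | rfl <;>
      first
      | exact absurd rfl hne
      | (refine Or.inl ⟨?_, by tauto, by tauto⟩; first | rfl | exact hc.1 _ _)
      | (refine Or.inr (Or.inl ⟨?_, by tauto, by tauto⟩); first | rfl | exact hc.1 _ _)
      | (refine Or.inr (Or.inr ⟨?_, by tauto, by tauto⟩); first | rfl | exact hc.1 _ _)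
  have hsub : colorsOn c {a, b, d} ⊆ {c a b, c a d, c b d} := by
    intro z hz
    rw [mem_colorsOn] at hz
    obtain ⟨a', ha', a'', ha'', hne, rfl⟩ := hz
    simp only [Finset.mem_insert, Finset.mem_singleton]
    rcases hmemcases a' ha' a'' ha'' hne with ⟨h, -⟩ | ⟨h, -⟩ | ⟨h, -⟩
    · exact Or.inl h
    · exact Or.inr (Or.inl h)
    · exact Or.inr (Or.inr h)
  have htri := hc.2 a b d hab had hbd
  by_cases h1 : c a b = c a d
  · by_cases h2 : c a b = c b d
    · -- all equal: one color
      have : colorsOn c {a, b, d} ⊆ {c a b} := by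
        intro z hz
        have := hsub hz
        simp only [Finset.mem_insert, Finset.mem_singleton] at this ⊢
        rcases this with h | h | h
        · exact h
        · rw [h, ← h1]
        · rw [h, ← h2]
      have hcard : (colorsOn c {a, b, d}).card ≤ 1 :=
        le_trans (Finset.card_le_card this) (by simp)
      have := Wt_le_twice_card c {a, b, d}
      omega
    · -- c a b = c a d ≠ c b d : both colors star
      have hstar : ∀ z ∈ colorsOn c {a, b, d}, starOn c {a, b, d} z := by
        intro z hz
        have hz' := hsub hz
        simp only [Finset.mem_insert, Finset.mem_singleton] at hz'
        have hzcases : z = c a b ∨ z = c b d := by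
          rcases hz' with h | h | h
          · exact Or.inl h
          · exact Or.inl (h.trans h1.symm)
          · exact Or.inr h
        rcases hzcases with rfl | rfl
        · refine ⟨a, Finset.mem_insert_self a _, ?_⟩
          intro a' ha' a'' ha'' hne hcol
          rcases hmemcases a' ha' a'' ha'' hne with ⟨-, h, -⟩ | ⟨-, h, -⟩ | ⟨hcc, -, -⟩
          · exact h
          · exact h
          · exact absurd (hcc.symm.trans hcol) (fun hh => h2 hh.symm)
        · refine ⟨b, Finset.mem_insert_of_mem (Finset.mem_insert_self b _), ?_⟩
          intro a' ha' a'' ha'' hne hcol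
          rcases hmemcases a' ha' a'' ha'' hne with ⟨hcc, -, -⟩ | ⟨hcc, -, -⟩ | ⟨-, h, -⟩
          · exact absurd (hcc.symm.trans hcol) h2
          · exact absurd (hcc.symm.trans hcol) (fun hh => h2 (h1.trans hh))
          · exact h
      rw [Wt_eq_card_of_all_star c _ hstar]
      calc (colorsOn c {a, b, d}).card ≤ ({c a b, c a d, c b d} : Finset β).card :=
            Finset.card_le_card hsub
        _ ≤ 2 := by
            have : ({c a b, c a d, c b d} : Finset β) = {c a b, c b d} := by
              rw [← h1]; simp
            rw [this]
            exact Finset.card_insert_le _ _ |>.trans (by simp)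
  · by_cases h2 : c a b = c b d
    · -- c a b = c b d ≠ c a d
      have hstar : ∀ z ∈ colorsOn c {a, b, d}, starOn c {a, b, d} z := by
        intro z hz
        have hz' := hsub hz
        simp only [Finset.mem_insert, Finset.mem_singleton] at hz'
        have hzcases : z = c a b ∨ z = c a d := by
          rcases hz' with h | h | h
          · exact Or.inl h
          · exact Or.inr h
          · exact Or.inl (h.trans h2.symm)
        rcases hzcases with rfl | rfl
        · refine ⟨b, Finset.mem_insert_of_mem (Finset.mem_insert_self b _), ?_⟩
          intro a' ha' a'' ha'' hne hcol
          rcases hmemcases a' ha' a'' ha'' hne with ⟨-, -, h⟩ | ⟨hcc, -, -⟩ | ⟨-, h, -⟩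
          · exact h
          · exact absurd (hcol.symm.trans hcc) h1
          · exact h
        · refine ⟨a, Finset.mem_insert_self a _, ?_⟩
          intro a' ha' a'' ha'' hne hcol
          rcases hmemcases a' ha' a'' ha'' hne with ⟨hcc, -, -⟩ | ⟨-, h, -⟩ | ⟨hcc, -, -⟩
          · exact absurd (hcc.symm.trans hcol) h1
          · exact h
          · exact absurd (h2.trans (hcc.symm.trans hcol)) h1
      rw [Wt_eq_card_of_all_star c _ hstar]
      calc (colorsOn c {a, b, d}).card ≤ ({c a b, c a d, c b d} : Finset β).card :=
            Finset.card_le_card hsub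
        _ ≤ 2 := by
            have : ({c a b, c a d, c b d} : Finset β) = {c a b, c a d} := by
              rw [← h2]
              ext t; simp only [Finset.mem_insert, Finset.mem_singleton]; tauto
            rw [this]
            exact Finset.card_insert_le _ _ |>.trans (by simp)
    · -- c a d = c b d forced
      have h3 : c a d = c b d := by
        by_contra h3
        exact htri ⟨h1, h2, h3⟩
      have hstar : ∀ z ∈ colorsOn c {a, b, d}, starOn c {a, b, d} z := by
        intro z hz
        have hz' := hsub hz
        simp only [Finset.mem_insert, Finset.mem_singleton] at hz'
        have hzcases : z = c a b ∨ z = c a d := by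
          rcases hz' with h | h | h
          · exact Or.inl h
          · exact Or.inr h
          · exact Or.inr (h.trans h3.symm)
        rcases hzcases with rfl | rfl
        · refine ⟨a, Finset.mem_insert_self a _, ?_⟩
          intro a' ha' a'' ha'' hne hcol
          rcases hmemcases a' ha' a'' ha'' hne with ⟨-, h, -⟩ | ⟨hcc, -, -⟩ | ⟨hcc, -, -⟩
          · exact h
          · exact absurd (hcc.symm.trans hcol) (fun hh => h1 hh.symm)
          · exact absurd (hcc.symm.trans hcol) (fun hh => h2 hh.symm)
        · refine ⟨d, Finset.mem_insert_of_mem (Finset.mem_insert_of_mem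
            (Finset.mem_singleton_self d)), ?_⟩
          intro a' ha' a'' ha'' hne hcol
          rcases hmemcases a' ha' a'' ha'' hne with ⟨hcc, -, -⟩ | ⟨-, -, h⟩ | ⟨-, -, h⟩
          · exact absurd (hcc.symm.trans hcol) h1
          · exact h
          · exact h
      rw [Wt_eq_card_of_all_star c _ hstar]
      calc (colorsOn c {a, b, d}).card ≤ ({c a b, c a d, c b d} : Finset β).card :=
            Finset.card_le_card hsub
        _ ≤ 2 := by
            have : ({c a b, c a d, c b d} : Finset β) = {c a b, c a d} := by
              rw [← h3]
              ext t; simp only [Finset.mem_insert, Finset.mem_singleton]; tauto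
            rw [this]
            exact Finset.card_insert_le _ _ |>.trans (by simp)

/-- Main counting theorem: weight of a Gallai coloring on S is at most ⌊3|S|/2⌋ - 2. -/
theorem main_phi (hc : IsGallai c) :
    ∀ n (S : Finset V), S.card = n → 2 ≤ n → Wt c S ≤ phiF n := by
  intro n
  induction n using Nat.strong_induction_on with
  | _ n IH =>
  intro S hcard h2
  by_cases hn2 : n = 2
  · subst hn2
    obtain ⟨a, b, hab, rfl⟩ := Finset.card_eq_two.mp hcard
    exact le_trans (Wt_pair hc hab) (by unfold phiF; omega)
  by_cases hn3 : n = 3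
  · subst hn3
    obtain ⟨a, b, d, hab, had, hbd, rfl⟩ := Finset.card_eq_three.mp hcard
    exact le_trans (Wt_three hc hab had hbd) (by unfold phiF; omega)
  have hn4 : 4 ≤ n := by omega
  obtain ⟨x, y, Pp, hsub, hnem, hdisj, hunion, hcard2, hmono⟩ := GP hc S (by omega)
  -- basic partition facts
  have hpart : ∀ a ∈ S, ∃ P ∈ Pp, a ∈ P := by
    intro a ha
    rw [← hunion] at ha
    simpa using Finset.mem_biUnion.mp ha
  have huniq : ∀ P ∈ Pp, ∀ Q ∈ Pp, ∀ a, a ∈ P → a ∈ Q → P = Q := by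
    intro P hP Q hQ a haP haQ
    by_contra hne
    exact Finset.disjoint_left.mp (hdisj P hP Q hQ hne) haP haQ
  have hsumcards : ∑ P ∈ Pp, P.card = n := by
    rw [← hcard, ← hunion]
    exact (Finset.card_biUnion (fun P hP Q hQ hne => hdisj P hP Q hQ hne)).symm
  have hPlt : ∀ P ∈ Pp, P.card < n := by
    intro P hP
    obtain ⟨P₁, hP₁, P₂, hP₂, hP₁₂⟩ := Finset.one_lt_card.mp hcard2
    have : ∃ Q ∈ Pp, Q ≠ P := by
      by_cases h : P₁ = P
      · exact ⟨P₂, hP₂, fun hh => hP₁₂ (h.trans hh.symm)⟩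
      · exact ⟨P₁, hP₁, h⟩
    obtain ⟨Q, hQ, hQP⟩ := this
    obtain ⟨q, hq⟩ := hnem Q hQ
    rw [← hcard]
    apply Finset.card_lt_card
    rw [Finset.ssubset_iff_of_subset (hsub P hP)]
    refine ⟨q, hsub Q hQ hq, fun hqP => ?_⟩
    exact hQP (huniq Q hQ P hP q hq hqP)
  have hWtP : ∀ P ∈ Pp, Wt c P ≤ phiF P.card := by
    intro P hP
    rcases Nat.lt_or_ge P.card 2 with h | h
    · have h1 : P.card = 1 := by
        have := Finset.card_pos.mpr (hnem P hP)
        omega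
      obtain ⟨v, rfl⟩ := Finset.card_eq_one.mp h1
      rw [Wt_singleton]
      exact Nat.zero_le _
    · exact IH P.card (hPlt P hP) P rfl h
  -- cross colors
  set CrossP : β → Prop := fun b => ∃ a a' P Q, P ∈ Pp ∧ Q ∈ Pp ∧ P ≠ Q ∧
    a ∈ P ∧ a' ∈ Q ∧ c a a' = b with hCrossP
  set CrossF : Finset β := (colorsOn c S).filter CrossP with hCrossF
  set cov : β → ℕ := fun b => ∑ P ∈ Pp, if b ∈ colorsOn c P then wcol c P b else 0
    with hcov
  have hCrossxy : CrossF ⊆ {x, y} := by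
    intro b hb
    obtain ⟨-, a, a', P, Q, hP, hQ, hPQ, haP, haQ, hcol⟩ := Finset.mem_filter.mp hb
    simp only [Finset.mem_insert, Finset.mem_singleton]
    rcases hmono P hP Q hQ hPQ with h | h
    · exact Or.inl (hcol ▸ (h a haP a' haQ).symm ▸ rfl)
    · exact Or.inr (hcol ▸ (h a haP a' haQ).symm ▸ rfl)
  have hcovsum : ∑ b ∈ colorsOn c S, cov b = ∑ P ∈ Pp, Wt c P := by
    rw [hcov]
    rw [Finset.sum_comm]
    apply Finset.sum_congr rfl
    intro P hP
    rw [Finset.sum_ite_mem]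
    rw [Finset.inter_eq_right.mpr (colorsOn_mono (hsub P hP))]
    rfl
  -- pointwise bounds
  have hcovsingle : ∀ b : β, ∀ P ∈ Pp, b ∈ colorsOn c P → wcol c P b ≤ cov b := by
    intro b P hP hbP
    show wcol c P b ≤ ∑ Q ∈ Pp, (if b ∈ colorsOn c Q then wcol c Q b else 0)
    calc wcol c P b = if b ∈ colorsOn c P then wcol c P b else 0 := by rw [if_pos hbP]
      _ ≤ ∑ Q ∈ Pp, (if b ∈ colorsOn c Q then wcol c Q b else 0) :=
          Finset.single_le_sum (f := fun Q => if b ∈ colorsOn c Q then wcol c Q b else 0)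
            (fun Q _ => Nat.zero_le _) hP
  have hpw1 : ∀ b ∈ colorsOn c S, ¬ CrossP b → wcol c S b ≤ cov b := by
    intro b hb hnc
    obtain ⟨a, ha, a', ha', hne, hcol⟩ := mem_colorsOn.mp hb
    obtain ⟨P₀, hP₀, haP₀⟩ := hpart a ha
    obtain ⟨Q₀, hQ₀, haQ₀⟩ := hpart a' ha'
    have hPQ : P₀ = Q₀ := by
      by_contra hne'
      exact hnc ⟨a, a', P₀, Q₀, hP₀, hQ₀, hne', haP₀, haQ₀, hcol⟩
    subst hPQ
    have hbP₀ : b ∈ colorsOn c P₀ := mem_colorsOn.mpr ⟨a, haP₀, a', haQ₀, hne, hcol⟩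
    by_cases hup : ∀ Q ∈ Pp, b ∈ colorsOn c Q → Q = P₀
    · have hc1 : wcol c P₀ b ≤ cov b := hcovsingle b P₀ hP₀ hbP₀
      by_cases hstar : starOn c P₀ b
      · have hstarS : starOn c S b := by
          obtain ⟨v, hvP₀, hcover⟩ := hstar
          refine ⟨v, hsub P₀ hP₀ hvP₀, ?_⟩
          intro a₁ ha₁ a₂ ha₂ hne₁₂ hcol₁₂
          obtain ⟨P₁, hP₁, ha₁P⟩ := hpart a₁ ha₁
          obtain ⟨P₂, hP₂, ha₂P⟩ := hpart a₂ ha₂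
          have hP₁₂ : P₁ = P₂ := by
            by_contra hne'
            exact hnc ⟨a₁, a₂, P₁, P₂, hP₁, hP₂, hne', ha₁P, ha₂P, hcol₁₂⟩
          subst hP₁₂
          have hbP₁ : b ∈ colorsOn c P₁ := mem_colorsOn.mpr ⟨a₁, ha₁P, a₂, ha₂P, hne₁₂, hcol₁₂⟩
          have := hup P₁ hP₁ hbP₁
          subst this
          exact hcover a₁ ha₁P a₂ ha₂P hne₁₂ hcol₁₂
        calc wcol c S b = 1 := by unfold wcol; rw [if_pos hstarS]
          _ ≤ wcol c P₀ b := wcol_pos c P₀ b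
          _ ≤ cov b := hc1
      · calc wcol c S b ≤ 2 := wcol_le_two c S b
          _ = wcol c P₀ b := by unfold wcol; rw [if_neg hstar]
          _ ≤ cov b := hc1
    · push_neg at hup
      obtain ⟨Q₁, hQ₁, hbQ₁, hQ₁ne⟩ := hup
      have hsum2 : wcol c Q₁ b + wcol c P₀ b ≤ cov b := by
        show wcol c Q₁ b + wcol c P₀ b ≤
          ∑ Q ∈ Pp, (if b ∈ colorsOn c Q then wcol c Q b else 0)
        have hsubset : ({Q₁, P₀} : Finset (Finset V)) ⊆ Pp := by
          intro T hT
          rcases Finset.mem_insert.mp hT with rfl | hT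
          · exact hQ₁
          · rw [Finset.mem_singleton] at hT; subst hT; exact hP₀
        have := Finset.sum_le_sum_of_subset (f := fun Q =>
          if b ∈ colorsOn c Q then wcol c Q b else 0) hsubset
        rwa [Finset.sum_pair hQ₁ne, if_pos hbQ₁, if_pos hbP₀] at this
      have := wcol_pos c Q₁ b
      have := wcol_pos c P₀ b
      have := wcol_le_two c S b
      omega
  have hpw3 : ∀ b ∈ colorsOn c S, ∀ u, u ∈ S →
      (∀ a a' P Q, P ∈ Pp → Q ∈ Pp → P ≠ Q → a ∈ P → a' ∈ Q → c a a' = b →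
        a = u ∨ a' = u) → wcol c S b ≤ cov b + 1 := by
    intro b hb u hu htouch
    by_cases hin : ∃ P ∈ Pp, b ∈ colorsOn c P
    · obtain ⟨P, hP, hbP⟩ := hin
      have := hcovsingle b P hP hbP
      have := wcol_pos c P b
      have := wcol_le_two c S b
      omega
    · push_neg at hin
      have hstarS : starOn c S b := by
        refine ⟨u, hu, ?_⟩
        intro a₁ ha₁ a₂ ha₂ hne₁₂ hcol₁₂
        obtain ⟨P₁, hP₁, ha₁P⟩ := hpart a₁ ha₁
        obtain ⟨P₂, hP₂, ha₂P⟩ := hpart a₂ ha₂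
        by_cases hP₁₂ : P₁ = P₂
        · subst hP₁₂
          exact absurd (mem_colorsOn.mpr ⟨a₁, ha₁P, a₂, ha₂P, hne₁₂, hcol₁₂⟩) (hin P₁ hP₁)
        · exact htouch a₁ a₂ P₁ P₂ hP₁ hP₂ hP₁₂ ha₁P ha₂P hcol₁₂
      calc wcol c S b = 1 := by unfold wcol; rw [if_pos hstarS]
        _ ≤ cov b + 1 := by omega
  -- glue lemma
  have hglue : ∀ exf : β → ℕ, (∀ b ∈ CrossF, wcol c S b ≤ cov b + exf b) →
      Wt c S ≤ (∑ P ∈ Pp, Wt c P) + ∑ b ∈ CrossF, exf b := by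
    intro exf hexf
    have hCS : CrossF ⊆ colorsOn c S := Finset.filter_subset _ _
    have h1 : ∑ b ∈ colorsOn c S \ CrossF, wcol c S b ≤
        ∑ b ∈ colorsOn c S \ CrossF, cov b := by
      apply Finset.sum_le_sum
      intro b hb
      rw [Finset.mem_sdiff] at hb
      apply hpw1 b hb.1
      intro hcp
      exact hb.2 (Finset.mem_filter.mpr ⟨hb.1, hcp⟩)
    have h2 : ∑ b ∈ CrossF, wcol c S b ≤ ∑ b ∈ CrossF, (cov b + exf b) :=
      Finset.sum_le_sum hexf
    have h3 : Wt c S = ∑ b ∈ colorsOn c S \ CrossF, wcol c S b +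
        ∑ b ∈ CrossF, wcol c S b := (Finset.sum_sdiff hCS).symm
    have h4 : ∑ b ∈ colorsOn c S \ CrossF, cov b + ∑ b ∈ CrossF, cov b =
        ∑ b ∈ colorsOn c S, cov b := Finset.sum_sdiff hCS
    rw [h3, ← hcovsum]
    rw [Finset.sum_add_distrib] at h2
    omega
  -- case analysis on the partition shape
  rcases Nat.lt_or_ge Pp.card 3 with hc3 | hc3
  · -- exactly two parts
    have hc2 : Pp.card = 2 := by omega
    obtain ⟨P, Q, hPQne, hPpeq⟩ := Finset.card_eq_two.mp hc2
    have hP : P ∈ Pp := by rw [hPpeq]; simp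
    have hQ : Q ∈ Pp := by rw [hPpeq]; simp
    have hsumPQ : ∑ T ∈ Pp, Wt c T = Wt c P + Wt c Q := by
      rw [hPpeq, Finset.sum_pair hPQne]
    have hcards : P.card + Q.card = n := by
      rw [← hsumcards, hPpeq, Finset.sum_pair hPQne]
    have hPc : 1 ≤ P.card := Finset.card_pos.mpr (hnem P hP)
    have hQc : 1 ≤ Q.card := Finset.card_pos.mpr (hnem Q hQ)
    have hmainPQ : ∀ z : β, (∀ a ∈ P, ∀ b' ∈ Q, c a b' = z) → Wt c S ≤ phiF n := by
      intro z hzprop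
      have hcrossz : ∀ b ∈ CrossF, b = z := by
        intro b hb
        obtain ⟨-, a, a', P₁, Q₁, hP₁, hQ₁, hPQ₁, haP₁, haQ₁, hcol⟩ :=
          Finset.mem_filter.mp hb
        rw [hPpeq] at hP₁ hQ₁
        simp only [Finset.mem_insert, Finset.mem_singleton] at hP₁ hQ₁
        rcases hP₁ with rfl | rfl <;> rcases hQ₁ with rfl | rfl
        · exact absurd rfl hPQ₁
        · rw [← hcol]; exact (hzprop a haP₁ a' haQ₁)
        · rw [← hcol, hc.1]; exact (hzprop a' haQ₁ a haP₁)
        · exact absurd rfl hPQ₁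
      have hCrossSubz : CrossF.card ≤ 1 := by
        apply Finset.card_le_one.mpr
        intro b hb b' hb'
        rw [hcrossz b hb, hcrossz b' hb']
      by_cases hsing : P.card = 1 ∨ Q.card = 1
      · -- singleton part: budget 1
        have hkey : ∃ u, u ∈ S ∧ (P = {u} ∨ Q = {u}) := by
          rcases hsing with h1 | h1
          · obtain ⟨u, rfl⟩ := Finset.card_eq_one.mp h1
            exact ⟨u, hsub _ hP (Finset.mem_singleton_self u), Or.inl rfl⟩
          · obtain ⟨u, rfl⟩ := Finset.card_eq_one.mp h1
            exact ⟨u, hsub _ hQ (Finset.mem_singleton_self u), Or.inr rfl⟩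
        obtain ⟨u, huS, hPU⟩ := hkey
        have hpoint : ∀ b ∈ CrossF, wcol c S b ≤ cov b + (fun _ => 1) b := by
          intro b hb
          apply hpw3 b (Finset.filter_subset _ _ hb) u huS
          intro a a' P₁ Q₁ hP₁ hQ₁ hPQ₁ haP₁ haQ₁ hcol
          rw [hPpeq] at hP₁ hQ₁
          simp only [Finset.mem_insert, Finset.mem_singleton] at hP₁ hQ₁
          rcases hP₁ with rfl | rfl <;> rcases hQ₁ with rfl | rfl
          · exact absurd rfl hPQ₁
          · rcases hPU with hu | hu
            · left; rw [hu] at haP₁; exact Finset.mem_singleton.mp haP₁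
            · right; rw [hu] at haQ₁; exact Finset.mem_singleton.mp haQ₁
          · rcases hPU with hu | hu
            · right; rw [hu] at haQ₁; exact Finset.mem_singleton.mp haQ₁
            · left; rw [hu] at haP₁; exact Finset.mem_singleton.mp haP₁
          · exact absurd rfl hPQ₁
        have hbound := hglue (fun _ => 1) hpoint
        have hsum1 : ∑ _b ∈ CrossF, (1:ℕ) ≤ 1 := by
          rw [Finset.sum_const, smul_eq_mul, mul_one]
          exact hCrossSubz
        have hWP := hWtP P hP
        have hWQ := hWtP Q hQ
        have harith : phiF P.card + phiF Q.card + 1 ≤ phiF n := by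
          unfold phiF
          rcases hsing with h1 | h1 <;> omega
        rw [hsumPQ] at hbound
        omega
      · -- both parts of size ≥ 2 : budget 2
        push_neg at hsing
        have hpoint : ∀ b ∈ CrossF, wcol c S b ≤ cov b + (fun _ => 2) b := by
          intro b hb
          have := wcol_le_two c S b
          simp only []
          omega
        have hbound := hglue (fun _ => 2) hpoint
        have hsum1 : ∑ _b ∈ CrossF, (2:ℕ) ≤ 2 := by
          rw [Finset.sum_const, smul_eq_mul]
          omega
        have hWP := hWtP P hP
        have hWQ := hWtP Q hQ
        have harith : phiF P.card + phiF Q.card + 2 ≤ phiF n := by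
          unfold phiF
          omega
        rw [hsumPQ] at hbound
        omega
    rcases hmono P hP Q hQ hPQne with hz | hz
    · exact hmainPQ x hz
    · exact hmainPQ y hz
  · -- at least 3 parts
    by_cases hsing3 : Pp.card = 3 ∧ ∃ U ∈ Pp, U.card = 1
    · -- three parts with a singleton : budget 3
      obtain ⟨hc3', U, hU, hU1⟩ := hsing3
      obtain ⟨u, rfl⟩ := Finset.card_eq_one.mp hU1
      have huS : u ∈ S := hsub _ hU (Finset.mem_singleton_self u)
      have herase : (Pp.erase {u}).card = 2 := by
        rw [Finset.card_erase_of_mem hU, hc3']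
      obtain ⟨P₁, P₂, hP₁₂ne, herase2⟩ := Finset.card_eq_two.mp herase
      have hP₁ : P₁ ∈ Pp := Finset.mem_of_mem_erase (by rw [herase2]; simp)
      have hP₂ : P₂ ∈ Pp := Finset.mem_of_mem_erase (by rw [herase2]; simp)
      have hP₁U : P₁ ≠ {u} := Finset.ne_of_mem_erase (by rw [herase2]; simp)
      have hP₂U : P₂ ≠ {u} := Finset.ne_of_mem_erase (by rw [herase2]; simp)
      have hall : ∀ T ∈ Pp, T = {u} ∨ T = P₁ ∨ T = P₂ := by
        intro T hT
        by_cases hTu : T = {u}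
        · exact Or.inl hTu
        · have : T ∈ Pp.erase {u} := Finset.mem_erase.mpr ⟨hTu, hT⟩
          rw [herase2] at this
          simp only [Finset.mem_insert, Finset.mem_singleton] at this
          exact Or.inr this
      have hsum3 : ∑ T ∈ Pp, Wt c T = Wt c {u} + (Wt c P₁ + Wt c P₂) := by
        have h1 : Pp = insert {u} (Pp.erase {u}) :=
          (Finset.insert_erase hU).symm
        rw [h1, Finset.sum_insert (Finset.notMem_erase _ _), herase2,
          Finset.sum_pair hP₁₂ne]
      have hcards3 : 1 + (P₁.card + P₂.card) = n := by
        have h1 : Pp = insert {u} (Pp.erase {u}) :=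
          (Finset.insert_erase hU).symm
        rw [← hsumcards, h1, Finset.sum_insert (Finset.notMem_erase _ _), herase2,
          Finset.sum_pair hP₁₂ne]
        simp
      have hP₁c : 1 ≤ P₁.card := Finset.card_pos.mpr (hnem P₁ hP₁)
      have hP₂c : 1 ≤ P₂.card := Finset.card_pos.mpr (hnem P₂ hP₂)
      have hmain3 : ∀ z : β, (z = x ∨ z = y) → (∀ a ∈ P₁, ∀ b' ∈ P₂, c a b' = z) →
          Wt c S ≤ phiF n := by
        intro z hzxy hzprop
        have hpoint : ∀ b ∈ CrossF, wcol c S b ≤ cov b + (fun b => if b = z then 2 else 1) b := by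
          intro b hb
          by_cases hbz : b = z
          · simp only [if_pos hbz]
            have := wcol_le_two c S b
            omega
          · simp only [if_neg hbz]
            apply hpw3 b (Finset.filter_subset _ _ hb) u huS
            intro a a' T₁ T₂ hT₁ hT₂ hT₁₂ haT₁ haT₂ hcol
            rcases hall T₁ hT₁ with rfl | rfl | rfl <;> rcases hall T₂ hT₂ with rfl | rfl | rfl
            · exact absurd rfl hT₁₂
            · left; exact Finset.mem_singleton.mp haT₁
            · left; exact Finset.mem_singleton.mp haT₁
            · right; exact Finset.mem_singleton.mp haT₂
            · exact absurd rfl hT₁₂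
            · exfalso; apply hbz; rw [← hcol]; exact hzprop _ haT₁ _ haT₂
            · right; exact Finset.mem_singleton.mp haT₂
            · exfalso; apply hbz; rw [← hcol, hc.1]; exact hzprop _ haT₂ _ haT₁
            · exact absurd rfl hT₁₂
        have hbound := hglue (fun b => if b = z then 2 else 1) hpoint
        have hsum1 : ∑ b ∈ CrossF, (if b = z then 2 else 1) ≤ 3 := by
          calc ∑ b ∈ CrossF, (if b = z then 2 else 1) ≤
              ∑ b ∈ ({x, y} : Finset β), (if b = z then 2 else 1) :=
                Finset.sum_le_sum_of_subset hCrossxy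
            _ ≤ 3 := by
              by_cases hxy : x = y
              · subst hxy
                have : ({x, x} : Finset β) = {x} := by simp
                rw [this, Finset.sum_singleton]
                split <;> omega
              · rw [Finset.sum_pair hxy]
                rcases hzxy with rfl | rfl
                · rw [if_pos rfl, if_neg (fun hh => hxy hh.symm)]
                · rw [if_pos rfl, if_neg hxy]
        have hW1 := hWtP P₁ hP₁
        have hW2 := hWtP P₂ hP₂
        have harith : phiF P₁.card + phiF P₂.card + 3 ≤ phiF n := by
          unfold phiF
          omega
        rw [hsum3, Wt_singleton] at hbound
        omega
      rcases hmono P₁ hP₁ P₂ hP₂ hP₁₂ne with hz | hz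
      · exact hmain3 x (Or.inl rfl) hz
      · exact hmain3 y (Or.inr rfl) hz
    · -- budget 4 : three big parts or ≥ 4 parts
      have hpoint : ∀ b ∈ CrossF, wcol c S b ≤ cov b + (fun _ => 2) b := by
        intro b hb
        have := wcol_le_two c S b
        simp only []
        omega
      have hbound := hglue (fun _ => 2) hpoint
      have hsum1 : ∑ _b ∈ CrossF, (2:ℕ) ≤ 4 := by
        rw [Finset.sum_const, smul_eq_mul]
        have h1 : CrossF.card ≤ 2 :=
          le_trans (Finset.card_le_card hCrossxy) (Finset.card_insert_le _ _ |>.trans (by simp))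
        omega
      have hsump : ∑ P ∈ Pp, Wt c P ≤ ∑ P ∈ Pp, phiF P.card :=
        Finset.sum_le_sum hWtP
      have harith : ∑ P ∈ Pp, phiF P.card + 4 ≤ phiF n := by
        by_cases hc4 : 4 ≤ Pp.card
        · -- multiset lemma
          have := arith_ge4 Pp.card (Pp.val.map Finset.card)
            (by rw [Multiset.card_map]; rfl)
            (by
              intro s hs
              obtain ⟨P, hP, rfl⟩ := Multiset.mem_map.mp hs
              exact Finset.card_pos.mpr (hnem P hP))
            hc4
          rw [Multiset.map_map] at this
          have he1 : ((Pp.val.map Finset.card).sum) = n := by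
            rw [← hsumcards]; rfl
          rw [he1] at this
          exact this
        · -- exactly 3 parts, all of size ≥ 2
          have hc3'' : Pp.card = 3 := by omega
          have hnosing : ∀ U ∈ Pp, 2 ≤ U.card := by
            intro U hU
            have h1 : 1 ≤ U.card := Finset.card_pos.mpr (hnem U hU)
            by_contra hcon
            exact hsing3 ⟨hc3'', U, hU, by omega⟩
          obtain ⟨A, B, D, hAB, hAD, hBD, hPp3⟩ := Finset.card_eq_three.mp hc3''
          have hsA : A ∈ Pp := by rw [hPp3]; simp
          have hsB : B ∈ Pp := by rw [hPp3]; simp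
          have hsD : D ∈ Pp := by rw [hPp3]; simp
          have hsum' : ∑ P ∈ Pp, phiF P.card = phiF A.card + phiF B.card + phiF D.card := by
            rw [hPp3, Finset.sum_insert (by simp [hAB, hAD]),
              Finset.sum_pair hBD]
            ring
          have hsumc : A.card + B.card + D.card = n := by
            rw [← hsumcards, hPp3, Finset.sum_insert (by simp [hAB, hAD]),
              Finset.sum_pair hBD]
            ring
          rw [hsum', ← hsumc]
          exact arith_3 A.card B.card D.card (hnosing A hsA) (hnosing B hsB) (hnosing D hsD)
      omega

/-- Deletion chain: from a set with (colors ≤ |S|-3) extract a p-subset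
with at most p-3 colors. -/
lemma chain (hc : IsGallai c) (p : ℕ) (hp : 8 ≤ p) :
    ∀ d (S : Finset V), S.card = p + d → (colorsOn c S).card + 3 ≤ S.card →
    ∃ T, T ⊆ S ∧ T.card = p ∧ (colorsOn c T).card + 3 ≤ p := by
  intro d
  induction d with
  | zero =>
    intro S h1 h2
    exact ⟨S, Finset.Subset.refl S, by omega, by omega⟩
  | succ d IH =>
    intro S hcard hcol
    have hS9 : 9 ≤ S.card := by omega
    by_cases hslack : (colorsOn c S).card + 4 ≤ S.card
    · obtain ⟨v, hv⟩ : S.Nonempty := Finset.card_pos.mp (by omega)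
      have hT'card : (S.erase v).card = p + d := by
        rw [Finset.card_erase_of_mem hv]; omega
      have hT'col : (colorsOn c (S.erase v)).card + 3 ≤ (S.erase v).card := by
        have := Finset.card_le_card (colorsOn_mono (c := c) (Finset.erase_subset v S))
        omega
      obtain ⟨T, hT1, hT2, hT3⟩ := IH (S.erase v) hT'card hT'col
      exact ⟨T, le_trans hT1 (Finset.erase_subset v S), hT2, hT3⟩
    · -- tight: there must be a star color
      have hex : ∃ b ∈ colorsOn c S, starOn c S b := by
        by_contra hno
        push_neg at hno
        have hwt : Wt c S = 2 * (colorsOn c S).card := by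
          unfold Wt
          rw [Finset.sum_congr rfl (fun b hb => by unfold wcol; rw [if_neg (hno b hb)])]
          rw [Finset.sum_const, smul_eq_mul, mul_comm]
        have hphi := main_phi hc S.card S rfl (by omega)
        rw [hwt] at hphi
        unfold phiF at hphi
        omega
      obtain ⟨b, hb, v, hv, hcover⟩ := hex
      have hT'card : (S.erase v).card = p + d := by
        rw [Finset.card_erase_of_mem hv]; omega
      have hsub2 : colorsOn c (S.erase v) ⊆ (colorsOn c S).erase b := by
        intro z hz
        rw [Finset.mem_erase]
        refine ⟨?_, colorsOn_mono (Finset.erase_subset v S) hz⟩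
        rintro rfl
        exact star_erase hcover hz
      have hT'col : (colorsOn c (S.erase v)).card + 3 ≤ (S.erase v).card := by
        have h1 := Finset.card_le_card hsub2
        have h2 : ((colorsOn c S).erase b).card = (colorsOn c S).card - 1 :=
          Finset.card_erase_of_mem hb
        have h3 : 1 ≤ (colorsOn c S).card := Finset.card_pos.mpr ⟨b, hb⟩
        omega
      obtain ⟨T, hT1, hT2, hT3⟩ := IH (S.erase v) hT'card hT'col
      exact ⟨T, le_trans hT1 (Finset.erase_subset v S), hT2, hT3⟩

/-! ### lower bound construction -/

lemma isGallai_const (V : Type*) (k : ℕ) (hk : 0 < k) :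
    IsGallai (fun _ _ : V => (⟨0, hk⟩ : Fin k)) := by
  constructor
  · intro a b; rfl
  · intro a b d _ _ _ h
    exact h.1 rfl

def lowC (k n : ℕ) (hk : 0 < k) : Fin n → Fin n → Fin k :=
  fun i j => ⟨min (min i.val j.val) (k-1), by omega⟩

lemma isGallai_lowC (k n : ℕ) (hk : 0 < k) : IsGallai (lowC k n hk) := by
  constructor
  · intro a b
    unfold lowC
    simp only [Fin.mk.injEq]
    omega
  · intro a b d hab had hbd h
    obtain ⟨h1, h2, h3⟩ := h
    unfold lowC at h1 h2 h3
    simp only [ne_eq, Fin.mk.injEq] at h1 h2 h3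
    have hab' : a.val ≠ b.val := fun hh => hab (Fin.ext hh)
    have had' : a.val ≠ d.val := fun hh => had (Fin.ext hh)
    have hbd' : b.val ≠ d.val := fun hh => hbd (Fin.ext hh)
    omega

lemma lowC_colors (k n p : ℕ) (hk : 0 < k) (hp : 8 ≤ p) (hn : n ≤ k + 2)
    (S : Finset (Fin n)) (hS : S.card = p) :
    p - 2 ≤ (colorsOn (lowC k n hk) S).card := by
  have hSne : S.Nonempty := Finset.card_pos.mp (by omega)
  set M := S.max' hSne with hM
  have hMS : M ∈ S := S.max'_mem hSne
  set T := S.erase M with hT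
  have hTcard : T.card = p - 1 := by rw [hT, Finset.card_erase_of_mem hMS, hS]
  have hTlt : ∀ v ∈ T, v.val < M.val := by
    intro v hv
    have h1 : v ≤ M := S.le_max' v (Finset.mem_of_mem_erase hv)
    have h2 : v ≠ M := Finset.ne_of_mem_erase hv
    exact lt_of_le_of_ne h1 (fun hh => h2 (Fin.ext hh))
  set f : Fin n → Fin k := fun v => ⟨min v.val (k-1), by omega⟩ with hf
  have himg : T.image f ⊆ colorsOn (lowC k n hk) S := by
    intro z hz
    obtain ⟨t, ht, rfl⟩ := Finset.mem_image.mp hz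
    rw [mem_colorsOn]
    refine ⟨t, Finset.mem_of_mem_erase ht, M, hMS, Finset.ne_of_mem_erase ht, ?_⟩
    unfold lowC
    simp only [Fin.mk.injEq, hf]
    have := hTlt t ht
    omega
  have hMv : M.val ≤ k + 1 := by
    have := M.isLt
    omega
  set T₂ := T.filter (fun v => k - 1 ≤ v.val) with hT₂
  set T₁ := T.filter (fun v => ¬ (k - 1 ≤ v.val)) with hT₁
  have hsplit : T₁.card + T₂.card = p - 1 := by
    have h := Finset.card_filter_add_card_filter_not
      (s := T) (p := fun v : Fin n => k - 1 ≤ v.val)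
    rw [hT₁, hT₂]
    omega
  have hT₂le : T₂.card ≤ 2 := by
    have hinj : T₂.card = (T₂.image Fin.val).card :=
      (Finset.card_image_of_injective T₂ Fin.val_injective).symm
    have hsub : T₂.image Fin.val ⊆ Finset.Icc (k-1) k := by
      intro m hm
      obtain ⟨v, hv, rfl⟩ := Finset.mem_image.mp hm
      rw [Finset.mem_filter] at hv
      rw [Finset.mem_Icc]
      have h1 := hTlt v hv.1
      have := hMv
      exact ⟨hv.2, by omega⟩
    have := Finset.card_le_card hsub
    rw [Nat.card_Icc] at this
    omega
  have hinj1 : Set.InjOn f T₁ := by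
    intro u hu v hv huv
    rw [Finset.mem_coe, hT₁, Finset.mem_filter] at hu hv
    have h1 : ¬ (k - 1 ≤ u.val) := hu.2
    have h2 : ¬ (k - 1 ≤ v.val) := hv.2
    have : (f u).val = (f v).val := by rw [huv]
    simp only [hf] at this
    apply Fin.ext
    omega
  have himg1card : (T₁.image f).card = T₁.card := Finset.card_image_of_injOn hinj1
  have hT₁sub : T₁.image f ⊆ T.image f :=
    Finset.image_subset_image (Finset.filter_subset _ _)
  rcases Finset.eq_empty_or_nonempty T₂ with hT₂e | ⟨w, hw⟩
  · -- T₂ empty: T₁ = T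
    have h0 : T₂.card = 0 := by rw [hT₂e]; simp
    have : T₁.card ≤ (T.image f).card := by
      rw [← himg1card]
      exact Finset.card_le_card hT₁sub
    have := Finset.card_le_card himg
    omega
  · have hwT : w ∈ T := (Finset.mem_filter.mp hw).1
    have hwk : k - 1 ≤ w.val := (Finset.mem_filter.mp hw).2
    have hfw : (f w).val = k - 1 := by
      simp only [hf]
      omega
    have hnotin : f w ∉ T₁.image f := by
      intro hcon
      obtain ⟨v, hv, hveq⟩ := Finset.mem_image.mp hcon
      rw [hT₁, Finset.mem_filter] at hv
      have : (f v).val = (f w).val := by rw [hveq]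
      simp only [hf] at this
      have := hv.2
      omega
    have hins : insert (f w) (T₁.image f) ⊆ T.image f := by
      intro z hz
      rcases Finset.mem_insert.mp hz with rfl | hz
      · exact Finset.mem_image_of_mem f hwT
      · exact hT₁sub hz
    have hcard_ins : (insert (f w) (T₁.image f)).card = T₁.card + 1 := by
      rw [Finset.card_insert_of_notMem hnotin, himg1card]
    have h5 := Finset.card_le_card hins
    have h6 := Finset.card_le_card himg
    omega

end GallaiAux

theorem gallaiNum_q_eq_p_sub_three (p k : ℕ) (hp : 8 ≤ p) (hk : p - 3 ≤ k) :
    gallaiNum k (p - 3) p = k + 3 ∧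
    (∀ c : Fin (k + 3) → Fin (k + 3) → Fin k, IsGallai c →
      ∃ S : Finset (Fin (k + 3)), S.card = p ∧ (colorsOn c S).card ≤ p - 3) ∧
    (∃ c : Fin (k + 2) → Fin (k + 2) → Fin k, IsGallai c ∧
      ∀ S : Finset (Fin (k + 2)), S.card = p → p - 2 ≤ (colorsOn c S).card) := by
  have hk0 : 0 < k := by omega
  have hpk3 : p ≤ k + 3 := by omega
  have hupper : ∀ c : Fin (k + 3) → Fin (k + 3) → Fin k, IsGallai c →
      ∃ S : Finset (Fin (k + 3)), S.card = p ∧ (colorsOn c S).card ≤ p - 3 := by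
    intro c hc
    have hcoluniv : (colorsOn c (Finset.univ : Finset (Fin (k+3)))).card ≤ k := by
      have h1 : colorsOn c Finset.univ ⊆ (Finset.univ : Finset (Fin k)) :=
        Finset.subset_univ _
      have h2 := Finset.card_le_card h1
      simpa using h2
    have hucard : (Finset.univ : Finset (Fin (k+3))).card = p + (k + 3 - p) := by
      simp only [Finset.card_univ, Fintype.card_fin]
      omega
    have hucol : (colorsOn c (Finset.univ : Finset (Fin (k+3)))).card + 3 ≤
        (Finset.univ : Finset (Fin (k+3))).card := by
      simp only [Finset.card_univ, Fintype.card_fin]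
      omega
    obtain ⟨T, hT1, hT2, hT3⟩ := GallaiAux.chain hc p hp (k + 3 - p) Finset.univ hucard hucol
    exact ⟨T, hT2, by omega⟩
  have hlowGallai := GallaiAux.isGallai_lowC k (k+2) hk0
  have hlow : ∀ S : Finset (Fin (k + 2)), S.card = p →
      p - 2 ≤ (colorsOn (GallaiAux.lowC k (k+2) hk0) S).card :=
    fun S hS => GallaiAux.lowC_colors k (k+2) p hk0 hp (le_refl _) S hS
  refine ⟨?_, hupper, ⟨GallaiAux.lowC k (k+2) hk0, hlowGallai, hlow⟩⟩
  have hmem : (k + 3) ∈ {n : ℕ | 0 < n ∧ ∀ c : Fin n → Fin n → Fin k, IsGallai c →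
      ∃ S : Finset (Fin n), S.card = p ∧ (colorsOn c S).card ≤ p - 3} :=
    ⟨by omega, hupper⟩
  apply le_antisymm
  · exact Nat.sInf_le hmem
  · apply le_csInf ⟨k + 3, hmem⟩
    intro n hn
    obtain ⟨hn0, hnall⟩ := hn
    by_contra hlt
    push_neg at hlt
    rcases Nat.lt_or_ge n p with hnp | hnp
    · obtain ⟨S, hS, -⟩ := hnall (fun _ _ => ⟨0, hk0⟩)
        (GallaiAux.isGallai_const (Fin n) k hk0)
      have h1 := Finset.card_le_card (Finset.subset_univ S)
      simp only [Finset.card_univ, Fintype.card_fin] at h1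
      omega
    · have hn2 : n ≤ k + 2 := by omega
      obtain ⟨S, hS, hcols⟩ := hnall (GallaiAux.lowC k n hk0) (GallaiAux.isGallai_lowC k n hk0)
      have h1 := GallaiAux.lowC_colors k n p hk0 hp hn2 S hS
      omega
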